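/- Let r, r' ∈ ℂ with r ∉ {0, 1, -1} and (r')² = 4r³ - 4r. Set c₁ = (2(r²-1)², (r²+1)(r²-3), (r²+1)(3r²-1), -2(r²-1)²) and c₂ = ((r²+1)(3r²-1), -2(r²-1)², 2(r²-1)², (r²+1)(r²-3)), with ℘-values (p₁, p₂, p₃, p₄) = (r, -1/r, -r, 1/r) and ℘'-values (r', r'/r², -i r', -i r'/r²). Define C_γ = -2 c₁^γ c₂^γ p_γ / (p_γ')² and C = C₁ + C₂ + C₃ + C₄. Then C = -2(r⁴ - 1)². -/

import Mathlib

/-- Computation of C = Σ C_γ in the Klein bottle construction: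
C = -2(r⁴ - 1)². -/
theorem klein_C (r r' : ℂ) (h0 : r ≠ 0) (h1 : r ≠ 1) (hm1 : r ≠ -1)
    (hr' : r' ^ 2 = 4 * r ^ 3 - 4 * r) :
    let c₁ : Fin 4 → ℂ :=
      ![2*(r^2-1)^2, (r^2+1)*(r^2-3), (r^2+1)*(3*r^2-1), -2*(r^2-1)^2]
    let c₂ : Fin 4 → ℂ :=
      ![(r^2+1)*(3*r^2-1), -2*(r^2-1)^2, 2*(r^2-1)^2, (r^2+1)*(r^2-3)]
    let p : Fin 4 → ℂ := ![r, -1/r, -r, 1/r]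
    let p' : Fin 4 → ℂ := ![r', r'/r^2, -Complex.I*r', -Complex.I*r'/r^2]
    let C : Fin 4 → ℂ := fun γ => -2 * (c₁ γ) * (c₂ γ) * p γ / (p' γ) ^ 2
    C 0 + C 1 + C 2 + C 3 = -2 * (r ^ 4 - 1) ^ 2 := by
  intro c₁ c₂ p p' C
  have hd : (4 : ℂ) * r ^ 3 - 4 * r ≠ 0 := by
    intro h
    have h4 : r * (r - 1) * (r + 1) = 0 := by linear_combination h / 4
    rcases mul_eq_zero.1 h4 with h' | h'
    · rcases mul_eq_zero.1 h' with h'' | h''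
      · exact h0 h''
      · exact h1 (sub_eq_zero.1 h'')
    · exact hm1 (eq_neg_of_add_eq_zero_left h')
  have hr'0 : r' ≠ 0 := by
    intro h; rw [h] at hr'; exact hd (by linear_combination -hr')
  have k2 : r' ^ 2 ≠ 0 := pow_ne_zero 2 hr'0
  have k4 : (r : ℂ) ^ 4 ≠ 0 := pow_ne_zero 4 h0
  simp only [C, c₁, c₂, p, p']
  simp only [Matrix.cons_val_zero, Matrix.cons_val_one, Matrix.head_cons,
    Matrix.cons_val_two, Matrix.tail_cons, Matrix.cons_val_three]
  have e2 : (-Complex.I * r') ^ 2 = -(r' ^ 2) := by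
    linear_combination r' ^ 2 * Complex.I_sq
  have e3 : (-Complex.I * r' / r ^ 2) ^ 2 = -(r' ^ 2) / r ^ 4 := by
    rw [div_pow, e2]; ring
  have e1 : (r' / r ^ 2) ^ 2 = r' ^ 2 / r ^ 4 := by rw [div_pow, ← pow_mul]
  rw [e1, e2, e3]
  have H0 : -2 * (2*(r^2-1)^2) * ((r^2+1)*(3*r^2-1)) * r / r' ^ 2
      = -((r^2-1)*(r^2+1)*(3*r^2-1)) := by
    rw [div_eq_iff k2]
    linear_combination ((r^2-1)*(r^2+1)*(3*r^2-1)) * hr'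
  have H1 : -2 * ((r^2+1)*(r^2-3)) * (-2*(r^2-1)^2) * (-1/r) / (r' ^ 2 / r ^ 4)
      = -((r^2+1)*(r^2-3)*(r^2-1)*r^2) := by
    rw [div_div_eq_mul_div, div_eq_iff k2, neg_div, mul_neg, one_div]
    field_simp
    linear_combination ((r^2+1)*(r^2-3)*(r^2-1)*r^3 + (-6*r^3+2*r^5+6*r^7-2*r^9) + (3 - r^2 + 3*r^3 - 3*r^4 - r^5 + r^6 - 3*r^7 + r^9)) * hr'
  have H2 : -2 * ((r^2+1)*(3*r^2-1)) * (2*(r^2-1)^2) * (-r) / (-(r' ^ 2))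
      = -((r^2-1)*(r^2+1)*(3*r^2-1)) := by
    rw [div_neg, neg_eq_iff_eq_neg, div_eq_iff k2]
    linear_combination -((r^2-1)*(r^2+1)*(3*r^2-1)) * hr'
  have H3 : -2 * (-2*(r^2-1)^2) * ((r^2+1)*(r^2-3)) * (1/r) / (-(r' ^ 2) / r ^ 4)
      = -((r^2+1)*(r^2-3)*(r^2-1)*r^2) := by
    rw [neg_div, div_neg, neg_eq_iff_eq_neg, div_div_eq_mul_div, div_eq_iff k2, one_div]
    field_simp
    linear_combination (-((r^2+1)*(r^2-3)*(r^2-1)*r^3) + (-3 + r^2 + 3*r^3 + 3*r^4 - r^5 - r^6 - 3*r^7 + r^9)) * hr'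
  rw [H0, H1, H2, H3]
  ring
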